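/- Every subgraph G of the complete bipartite graph K_{8,30} contains a copy of K_{2,2}, or the bipartite complement of G contains a copy of K_{5,5}. (Hence BR_8(K_{2,2}, K_{5,5}) ≤ 30.) -/

import Mathlib

/-- A subgraph of the complete bipartite graph `K_{m,n}` is identified with its
edge set, a finset of pairs `(x, y)` with `x` in the part `X = Fin m` and
`y` in the part `Y = Fin n`.  `bContains s t E` says that the bipartite graph
with edge set `E` contains a copy of `K_{s,t}`: there are `s` distinct
vertices of `X` and `t` distinct vertices of `Y` with all pairs present. -/
def bContains {m n : ℕ} (s t : ℕ) (E : Finset (Fin m × Fin n)) : Prop :=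
  ∃ (A : Finset (Fin m)) (B : Finset (Fin n)),
    A.card = s ∧ B.card = t ∧ ∀ x ∈ A, ∀ y ∈ B, (x, y) ∈ E

/-- The bipartite complement: edge set `(X × Y) \ E`. -/
def bCompl {m n : ℕ} (E : Finset (Fin m × Fin n)) : Finset (Fin m × Fin n) :=
  Finset.univ \ E

/-- The neighborhood `N_G(x) ⊆ Y` of a vertex `x ∈ X`. -/
def bNbhd {m n : ℕ} (E : Finset (Fin m × Fin n)) (x : Fin m) : Finset (Fin n) :=
  Finset.univ.filter (fun y => (x, y) ∈ E)

/-- The degree of a vertex `x ∈ X`. -/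
def bDeg {m n : ℕ} (E : Finset (Fin m × Fin n)) (x : Fin m) : ℕ :=
  (bNbhd E x).card

/-- `Δ(G_X)`: the maximum degree over the vertices of the part `X`. -/
def bMaxDegX {m n : ℕ} (E : Finset (Fin m × Fin n)) : ℕ :=
  Finset.univ.sup (fun x => bDeg E x)

open Finset

theorem stmt_7 (E : Finset (Fin 8 × Fin 30)) :
    bContains 2 2 E ∨ bContains 5 5 (bCompl E) := by
  by_contra hcon
  push_neg at hcon
  obtain ⟨h2, h5⟩ := hcon
  -- the "column" of y : the red neighborhood of y in X
  set R : Fin 30 → Finset (Fin 8) := fun y => univ.filter (fun x => (x, y) ∈ E) with hRdef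
  -- consequence of no K_{2,2}
  have L1 : ∀ y y' : Fin 30, y ≠ y' → (R y ∩ R y').card ≤ 1 := by
    intro y y' hne
    by_contra hle
    push_neg at hle
    obtain ⟨P, hPsub, hPcard⟩ := Finset.exists_subset_card_eq (n := 2) hle
    apply h2
    refine ⟨P, {y, y'}, hPcard, Finset.card_pair hne, ?_⟩
    intro x hx w hw
    have hx' := hPsub hx
    rw [mem_inter] at hx'
    rcases mem_insert.1 hw with rfl | hw'
    · exact (mem_filter.1 hx'.1).2
    · rw [mem_singleton] at hw'
      subst hw'
      exact (mem_filter.1 hx'.2).2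
  -- consequence of no K_{5,5} in the complement
  have L2 : ∀ B : Finset (Fin 8), B.card = 3 →
      (univ.filter (fun y => R y ⊆ B)).card ≤ 4 := by
    intro B hB
    by_contra hle
    push_neg at hle
    obtain ⟨T, hTsub, hTcard⟩ := Finset.exists_subset_card_eq (n := 5) hle
    apply h5
    refine ⟨Bᶜ, T, ?_, hTcard, ?_⟩
    · rw [card_compl, hB]
      rfl
    · intro x hx y hy
      have hyf := (mem_filter.1 (hTsub hy)).2
      have hxB : x ∉ B := mem_compl.1 hx
      have hxR : x ∉ R y := fun hxx => hxB (hyf hxx)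
      rw [bCompl, mem_sdiff]
      refine ⟨mem_univ _, fun hxE => hxR ?_⟩
      rw [hRdef]
      simp only [mem_filter, mem_univ, true_and]
      exact hxE
  -- the collection of 3-subsets of X
  set P3 : Finset (Finset (Fin 8)) := Finset.powersetCard 3 univ with hP3def
  -- global count
  have key : ∑ B ∈ P3, (univ.filter (fun y => R y ⊆ B)).card ≤ 224 := by
    calc ∑ B ∈ P3, (univ.filter (fun y => R y ⊆ B)).card
        ≤ ∑ _B ∈ P3, 4 :=
          Finset.sum_le_sum (fun B hB => L2 B (Finset.mem_powersetCard.1 hB).2)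
      _ = P3.card * 4 := by rw [Finset.sum_const, smul_eq_mul]
      _ = 224 := by
          rw [hP3def, Finset.card_powersetCard, Finset.card_univ]
          rfl
  have swap : ∑ B ∈ P3, (univ.filter (fun y => R y ⊆ B)).card
      = ∑ y : Fin 30, (P3.filter (fun B => R y ⊆ B)).card := by
    simp only [Finset.card_filter]
    exact Finset.sum_comm
  -- lower bound for the number of 3-sets containing a given column
  have lower : ∀ y : Fin 30,
      (if (R y).card ≤ 3 then Nat.choose (8 - (R y).card) (3 - (R y).card) else 0)
        ≤ (P3.filter (fun B => R y ⊆ B)).card := by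
    intro y
    by_cases he : (R y).card ≤ 3
    · rw [if_pos he]
      have hcards : ((univ \ R y).powersetCard (3 - (R y).card)).card
          = Nat.choose (8 - (R y).card) (3 - (R y).card) := by
        rw [Finset.card_powersetCard, Finset.card_sdiff_of_subset (Finset.subset_univ _),
          Finset.card_univ]
        rfl
      rw [← hcards]
      apply Finset.card_le_card_of_injOn (fun C => C ∪ R y)
      · intro C hC
        rw [Finset.mem_coe, Finset.mem_powersetCard] at hC
        obtain ⟨hCsub, hCcard⟩ := hC
        have hdisj : Disjoint C (R y) :=
          Finset.disjoint_left.2 (fun a haC haR => (Finset.mem_sdiff.1 (hCsub haC)).2 haR)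
        rw [Finset.mem_coe, Finset.mem_filter, hP3def, Finset.mem_powersetCard]
        refine ⟨⟨Finset.subset_univ _, ?_⟩, Finset.subset_union_right⟩
        rw [Finset.card_union_of_disjoint hdisj, hCcard]
        omega
      · intro C hC C' hC' heq
        simp only at heq
        rw [Finset.mem_coe, Finset.mem_powersetCard] at hC hC'
        have hd : Disjoint C (R y) :=
          Finset.disjoint_left.2 (fun a haC haR => (Finset.mem_sdiff.1 (hC.1 haC)).2 haR)
        have hd' : Disjoint C' (R y) :=
          Finset.disjoint_left.2 (fun a haC haR => (Finset.mem_sdiff.1 (hC'.1 haC)).2 haR)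
        ext a
        constructor
        · intro haC
          have : a ∈ C' ∪ R y := by rw [← heq]; exact Finset.mem_union_left _ haC
          rcases Finset.mem_union.1 this with h | h
          · exact h
          · exact absurd h (Finset.disjoint_left.1 hd haC)
        · intro haC
          have : a ∈ C ∪ R y := by rw [heq]; exact Finset.mem_union_left _ haC
          rcases Finset.mem_union.1 this with h | h
          · exact h
          · exact absurd h (Finset.disjoint_left.1 hd' haC)
    · rw [if_neg he]
      exact Nat.zero_le _
  have main1 : ∑ y : Fin 30,
      (if (R y).card ≤ 3 then Nat.choose (8 - (R y).card) (3 - (R y).card) else 0) ≤ 224 := by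
    calc ∑ y : Fin 30,
        (if (R y).card ≤ 3 then Nat.choose (8 - (R y).card) (3 - (R y).card) else 0)
        ≤ ∑ y : Fin 30, (P3.filter (fun B => R y ⊆ B)).card :=
          Finset.sum_le_sum (fun y _ => lower y)
      _ = ∑ B ∈ P3, (univ.filter (fun y => R y ⊆ B)).card := swap.symm
      _ ≤ 224 := key
  -- pair count: the pairs inside the columns are pairwise disjoint
  have main2 : ∑ y : Fin 30, Nat.choose (R y).card 2 ≤ 28 := by
    have hdisj : ∀ y ∈ (univ : Finset (Fin 30)), ∀ y' ∈ (univ : Finset (Fin 30)), y ≠ y' →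
        Disjoint ((R y).powersetCard 2) ((R y').powersetCard 2) := by
      intro y _ y' _ hne
      rw [Finset.disjoint_left]
      intro p hp hp'
      rw [Finset.mem_powersetCard] at hp hp'
      have hsub : p ⊆ R y ∩ R y' := Finset.subset_inter hp.1 hp'.1
      have := Finset.card_le_card hsub
      rw [hp.2] at this
      exact absurd (le_trans this (L1 y y' hne)) (by norm_num)
    calc ∑ y : Fin 30, Nat.choose (R y).card 2
        = ∑ y : Fin 30, ((R y).powersetCard 2).card := by
          refine Finset.sum_congr rfl (fun y _ => ?_)
          rw [Finset.card_powersetCard]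
      _ = (Finset.univ.biUnion (fun y => (R y).powersetCard 2)).card :=
          (Finset.card_biUnion hdisj).symm
      _ ≤ ((univ : Finset (Fin 8)).powersetCard 2).card := by
          apply Finset.card_le_card
          intro p hp
          rw [Finset.mem_biUnion] at hp
          obtain ⟨y, _, hy⟩ := hp
          rw [Finset.mem_powersetCard] at hy ⊢
          exact ⟨Finset.subset_univ _, hy.2⟩
      _ = 28 := by
          rw [Finset.card_powersetCard, Finset.card_univ]
          rfl
  -- fiberwise decomposition over the column size
  have hmaps : ∀ y ∈ (univ : Finset (Fin 30)), (R y).card ∈ Finset.range 9 := by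
    intro y _
    rw [Finset.mem_range]
    have h := Finset.card_le_univ (R y)
    have h8 : Fintype.card (Fin 8) = 8 := rfl
    omega
  set n : ℕ → ℕ := fun j => (univ.filter (fun y => (R y).card = j)).card with hndef
  have fib : ∀ G : ℕ → ℕ, ∑ y : Fin 30, G ((R y).card) = ∑ j ∈ Finset.range 9, n j * G j := by
    intro G
    rw [← Finset.sum_fiberwise_of_maps_to hmaps (fun y => G ((R y).card))]
    refine Finset.sum_congr rfl (fun j _ => ?_)
    rw [hndef]
    have hcg : ∀ y ∈ univ.filter (fun y => (R y).card = j), G ((R y).card) = G j := by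
      intro y hy
      rw [(Finset.mem_filter.1 hy).2]
    rw [Finset.sum_congr rfl hcg, Finset.sum_const, smul_eq_mul]
  have count30 : ∑ j ∈ Finset.range 9, n j = 30 := by
    have h30 := Finset.card_eq_sum_card_fiberwise hmaps
    simp only [Finset.card_univ, Fintype.card_fin] at h30
    exact h30.symm
  have e1 : ∑ j ∈ Finset.range 9, n j *
      (if j ≤ 3 then Nat.choose (8 - j) (3 - j) else 0) ≤ 224 := by
    rw [← fib (fun j => if j ≤ 3 then Nat.choose (8 - j) (3 - j) else 0)]
    exact main1
  have e2 : ∑ j ∈ Finset.range 9, n j * Nat.choose j 2 ≤ 28 := by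
    rw [← fib (fun j => Nat.choose j 2)]
    exact main2
  -- solve the integer program : n 1 = 2 and n 2 = 28
  rw [Finset.sum_range_succ, Finset.sum_range_succ, Finset.sum_range_succ,
    Finset.sum_range_succ, Finset.sum_range_succ, Finset.sum_range_succ,
    Finset.sum_range_succ, Finset.sum_range_succ, Finset.sum_range_succ,
    Finset.sum_range_zero] at e1 e2 count30
  norm_num at e1 e2
  rw [show Nat.choose 8 3 = 56 from by decide, show Nat.choose 7 2 = 21 from by decide] at e1
  rw [show Nat.choose 4 2 = 6 from by decide, show Nat.choose 5 2 = 10 from by decide,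
    show Nat.choose 6 2 = 15 from by decide, show Nat.choose 7 2 = 21 from by decide,
    show Nat.choose 8 2 = 28 from by decide] at e2
  have d1 : 630 + 35 * n 0 ≤ 224 + 15 * n 2 + 20 * n 3 + 21 * (n 4 + n 5 + n 6 + n 7 + n 8) := by
    omega
  have d3 : 25 * n 3 + 69 * (n 4 + n 5 + n 6 + n 7 + n 8) + 35 * n 0 ≤ 14 := by omega
  have z0 : n 0 = 0 := by omega
  have z3 : n 3 = 0 := by omega
  have z4 : n 4 = 0 := by omega
  have z5 : n 5 = 0 := by omega
  have z6 : n 6 = 0 := by omega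
  have z7 : n 7 = 0 := by omega
  have z8 : n 8 = 0 := by omega
  have hn1 : n 1 = 2 := by omega
  have hn2 : n 2 = 28 := by omega
  -- the 28 columns of size 2 realize all 28 pairs
  have hinj : Set.InjOn R (univ.filter (fun y => (R y).card = 2)) := by
    intro y hy y' hy' heq
    by_contra hne
    have := L1 y y' hne
    rw [heq, Finset.inter_self] at this
    rw [Finset.mem_coe, Finset.mem_filter] at hy'
    omega
  have himg : (univ.filter (fun y => (R y).card = 2)).image R
      = (univ : Finset (Fin 8)).powersetCard 2 := by
    apply Finset.eq_of_subset_of_card_le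
    · intro p hp
      obtain ⟨y, hy, rfl⟩ := Finset.mem_image.1 hp
      rw [Finset.mem_powersetCard]
      exact ⟨Finset.subset_univ _, (Finset.mem_filter.1 hy).2⟩
    · rw [Finset.card_image_of_injOn hinj, Finset.card_powersetCard, Finset.card_univ]
      have h28 : (univ.filter (fun y => (R y).card = 2)).card = 28 := hn2
      rw [h28]
      decide
  -- get the two columns of size 1
  have hcard1 : (univ.filter (fun y => (R y).card = 1)).card = 2 := hn1
  obtain ⟨y1, y2, hy12, hset⟩ := Finset.card_eq_two.1 hcard1
  have hy1 : y1 ∈ univ.filter (fun y => (R y).card = 1) := by rw [hset]; exact mem_insert_self _ _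
  have hy2 : y2 ∈ univ.filter (fun y => (R y).card = 1) := by
    rw [hset]; exact mem_insert_of_mem (mem_singleton_self _)
  obtain ⟨a, ha⟩ := Finset.card_eq_one.1 (Finset.mem_filter.1 hy1).2
  obtain ⟨b, hb⟩ := Finset.card_eq_one.1 (Finset.mem_filter.1 hy2).2
  -- pick a 3-set containing both a and b
  obtain ⟨B, hBsup, hBcard⟩ := Finset.exists_superset_card_eq
    (s := ({a, b} : Finset (Fin 8))) (n := 3)
    (le_trans (Finset.card_insert_le _ _) (by simp)) (by simp)
  -- now count columns inside B
  have hs2 : 3 ≤ (univ.filter (fun y => (R y).card = 2 ∧ R y ⊆ B)).card := by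
    have hsurj : Set.SurjOn R
        (univ.filter (fun y => (R y).card = 2 ∧ R y ⊆ B) : Finset (Fin 30))
        (B.powersetCard 2 : Finset (Finset (Fin 8))) := by
      intro p hp
      rw [Finset.mem_coe, Finset.mem_powersetCard] at hp
      have hp' : p ∈ (univ : Finset (Fin 8)).powersetCard 2 := by
        rw [Finset.mem_powersetCard]
        exact ⟨Finset.subset_univ _, hp.2⟩
      rw [← himg] at hp'
      obtain ⟨y, hy, hyp⟩ := Finset.mem_image.1 hp'
      refine ⟨y, ?_, hyp⟩
      have hmem : y ∈ univ.filter (fun y => (R y).card = 2 ∧ R y ⊆ B) := by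
        rw [Finset.mem_filter]
        exact ⟨mem_univ _, (Finset.mem_filter.1 hy).2, by rw [hyp]; exact hp.1⟩
      exact hmem
    have := Finset.card_le_card_of_surjOn R hsurj
    rw [Finset.card_powersetCard, hBcard] at this
    exact this
  have hs1 : 2 ≤ (univ.filter (fun y => (R y).card = 1 ∧ R y ⊆ B)).card := by
    have hsub : ({y1, y2} : Finset (Fin 30)) ⊆
        univ.filter (fun y => (R y).card = 1 ∧ R y ⊆ B) := by
      intro y hy
      rcases Finset.mem_insert.1 hy with rfl | hy'
      · rw [Finset.mem_filter]
        refine ⟨mem_univ _, (Finset.mem_filter.1 hy1).2, ?_⟩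
        rw [ha, Finset.singleton_subset_iff]
        exact hBsup (mem_insert_self _ _)
      · rw [Finset.mem_singleton] at hy'
        subst hy'
        rw [Finset.mem_filter]
        refine ⟨mem_univ _, (Finset.mem_filter.1 hy2).2, ?_⟩
        rw [hb, Finset.singleton_subset_iff]
        exact hBsup (mem_insert_of_mem (mem_singleton_self _))
    have := Finset.card_le_card hsub
    rw [Finset.card_pair hy12] at this
    exact this
  have hdisj12 : Disjoint (univ.filter (fun y => (R y).card = 1 ∧ R y ⊆ B))
      (univ.filter (fun y => (R y).card = 2 ∧ R y ⊆ B)) := by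
    rw [Finset.disjoint_left]
    intro y h1 h2
    have := (Finset.mem_filter.1 h1).2.1
    have := (Finset.mem_filter.1 h2).2.1
    omega
  have hunion : (univ.filter (fun y => (R y).card = 1 ∧ R y ⊆ B))
      ∪ (univ.filter (fun y => (R y).card = 2 ∧ R y ⊆ B))
      ⊆ univ.filter (fun y => R y ⊆ B) := by
    intro y hy
    rcases Finset.mem_union.1 hy with h | h
    · rw [Finset.mem_filter] at h ⊢
      exact ⟨h.1, h.2.2⟩
    · rw [Finset.mem_filter] at h ⊢
      exact ⟨h.1, h.2.2⟩
  have hfinal : 5 ≤ (univ.filter (fun y => R y ⊆ B)).card := by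
    calc 5 ≤ (univ.filter (fun y => (R y).card = 1 ∧ R y ⊆ B)).card
        + (univ.filter (fun y => (R y).card = 2 ∧ R y ⊆ B)).card := by omega
      _ = ((univ.filter (fun y => (R y).card = 1 ∧ R y ⊆ B))
          ∪ (univ.filter (fun y => (R y).card = 2 ∧ R y ⊆ B))).card :=
          (Finset.card_union_of_disjoint hdisj12).symm
      _ ≤ (univ.filter (fun y => R y ⊆ B)).card := Finset.card_le_card hunion
  have := L2 B hBcard
  omega
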